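/- As a formal power series identity in x over ℚ(s): 1/s = (1/(2s))·Ψ(x/s) + (1/(2(s−x)))·Ψ(x/(s−x)), where Ψ(z) = Σ_{k≥0} E_k(0) z^k and 1/(s−x), x/(s−x) are expanded as geometric series in x/s. -/

import Mathlib

open Finset


/-- `E_k(0)`, the value at `0` of the `k`-th Euler polynomial
(defined by `2/(1+eᵗ) = ∑_k E_k(0) tᵏ/k!`), via the explicit formula. -/
noncomputable def eulerZero (k : ℕ) : ℚ :=
  ∑ i ∈ Finset.range (k + 1), (2 : ℚ)⁻¹ ^ i *
    ∑ j ∈ Finset.range (i + 1), (-1 : ℚ) ^ j * (i.choose j : ℚ) * (j : ℚ) ^ k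


noncomputable def Dq (i k : ℕ) : ℚ :=
  ∑ j ∈ Finset.range (i + 1), (-1 : ℚ) ^ j * (i.choose j : ℚ) * (j : ℚ) ^ k

lemma eulerZero_eq (k : ℕ) : eulerZero k = ∑ i ∈ range (k + 1), (2 : ℚ)⁻¹ ^ i * Dq i k := rfl

lemma shift_pow (i n : ℕ) :
    ∑ j ∈ range (i + 1), (-1 : ℚ) ^ j * (i.choose j : ℚ) * ((j : ℚ) + 1) ^ n
      = ∑ m ∈ range (n + 1), (n.choose m : ℚ) * Dq i m := by
  have h : ∀ j ∈ range (i + 1),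
      (-1 : ℚ) ^ j * (i.choose j : ℚ) * ((j : ℚ) + 1) ^ n
        = ∑ m ∈ range (n + 1),
            (n.choose m : ℚ) * ((-1 : ℚ) ^ j * (i.choose j : ℚ) * (j : ℚ) ^ m) := by
    intro j _
    rw [add_pow]
    rw [Finset.mul_sum]
    refine Finset.sum_congr rfl fun m _ => by ring
  rw [Finset.sum_congr rfl h, Finset.sum_comm]
  refine Finset.sum_congr rfl fun m _ => ?_
  rw [Dq, Finset.mul_sum]

lemma Dq_eq_zero : ∀ k i : ℕ, k < i → Dq i k = 0 := by
  intro k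
  induction k using Nat.strong_induction_on with
  | _ k ih =>
    intro i hki
    rcases k with _ | k
    · have h0 : i ≠ 0 := by omega
      have h1 := Int.alternating_sum_range_choose_of_ne h0
      have h2 : ((∑ j ∈ range (i + 1), (-1 : ℤ) ^ j * (i.choose j : ℤ) : ℤ) : ℚ) = 0 := by
        rw [h1]; norm_num
      push_cast at h2
      simpa [Dq] using h2
    · obtain ⟨i', rfl⟩ : ∃ i', i = i' + 1 := ⟨i - 1, by omega⟩
      have hki' : k < i' := by omega
      have hstep : Dq (i' + 1) (k + 1)
          = ∑ j ∈ range (i' + 1), (-((i' : ℚ) + 1)) *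
              ((-1 : ℚ) ^ j * (i'.choose j : ℚ) * ((j : ℚ) + 1) ^ k) := by
        rw [Dq, Finset.sum_range_succ']
        simp only [Nat.cast_zero, pow_zero, Nat.choose_zero_right, Nat.cast_one]
        rw [show (1:ℚ) * 1 * (0:ℚ) ^ (k+1) = 0 by simp, add_zero]
        refine Finset.sum_congr rfl fun j _ => ?_
        have hcast : ((i' + 1).choose (j + 1) : ℚ) * ((j : ℚ) + 1)
            = ((i' : ℚ) + 1) * (i'.choose j : ℚ) := by
          have := Nat.add_one_mul_choose_eq i' j
          have hq : (((i' + 1) * i'.choose j : ℕ) : ℚ)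
              = (((i' + 1).choose (j + 1) * (j + 1) : ℕ) : ℚ) := by
            exact_mod_cast congrArg (Nat.cast : ℕ → ℚ) this
          push_cast at hq
          linarith
        push_cast
        calc (-1 : ℚ) ^ (j + 1) * ((i' + 1).choose (j + 1) : ℚ) * ((j : ℚ) + 1) ^ (k + 1)
            = -((-1:ℚ)^j * (((i' + 1).choose (j + 1) : ℚ) * ((j : ℚ) + 1)) * ((j:ℚ)+1)^k) := by
              ring
          _ = _ := by rw [hcast]; push_cast; ring
      rw [hstep, ← Finset.mul_sum, shift_pow]
      have : ∑ m ∈ range (k + 1), (k.choose m : ℚ) * Dq i' m = 0 := by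
        refine Finset.sum_eq_zero fun m hm => ?_
        have hm' : m ≤ k := Nat.lt_succ_iff.mp (mem_range.mp hm)
        rw [ih m (Nat.lt_succ_of_le hm') i' (by omega)]
        ring
      rw [this, mul_zero]

lemma Dq_succ_formula (n i : ℕ) :
    ∑ j ∈ range (i + 1), (-1 : ℚ) ^ j * (i.choose j : ℚ) * ((j : ℚ) + 1) ^ n
      = Dq i n - Dq (i + 1) n := by
  set S : ℚ := ∑ j ∈ range (i + 1), (-1 : ℚ) ^ j * (i.choose (j + 1) : ℚ) * ((j : ℚ) + 1) ^ n
    with hS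
  have hDi : Dq i n = (0 : ℚ) ^ n - S := by
    rw [Dq, Finset.sum_range_succ']
    have h1 : ∑ j ∈ range i, (-1 : ℚ) ^ (j + 1) * (i.choose (j + 1) : ℚ) * ((j + 1 : ℕ) : ℚ) ^ n
        = -(∑ j ∈ range i, (-1 : ℚ) ^ j * (i.choose (j + 1) : ℚ) * ((j : ℚ) + 1) ^ n) := by
      rw [← Finset.sum_neg_distrib]
      refine Finset.sum_congr rfl fun j _ => by push_cast; ring
    rw [h1]
    have h2 : S = ∑ j ∈ range i, (-1 : ℚ) ^ j * (i.choose (j + 1) : ℚ) * ((j : ℚ) + 1) ^ n := by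
      rw [hS, Finset.sum_range_succ, Nat.choose_succ_self, Nat.cast_zero, mul_zero, zero_mul,
        add_zero]
    rw [← h2]
    simp only [Nat.choose_zero_right, Nat.cast_one, one_mul]
    ring
  have hDi1 : Dq (i + 1) n
      = (0 : ℚ) ^ n
        - (∑ j ∈ range (i + 1), (-1 : ℚ) ^ j * (i.choose j : ℚ) * ((j : ℚ) + 1) ^ n) - S := by
    rw [Dq, Finset.sum_range_succ']
    have h1 : ∀ j ∈ range (i + 1),
        (-1 : ℚ) ^ (j + 1) * ((i + 1).choose (j + 1) : ℚ) * ((j + 1 : ℕ) : ℚ) ^ n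
          = -((-1 : ℚ) ^ j * (i.choose j : ℚ) * ((j : ℚ) + 1) ^ n)
            + -((-1 : ℚ) ^ j * (i.choose (j + 1) : ℚ) * ((j : ℚ) + 1) ^ n) := by
      intro j _
      have : ((i + 1).choose (j + 1) : ℚ) = (i.choose j : ℚ) + (i.choose (j + 1) : ℚ) := by
        rw [Nat.choose_succ_succ]; push_cast; ring
      rw [this]; push_cast; ring
    rw [Finset.sum_congr rfl h1, Finset.sum_add_distrib, Finset.sum_neg_distrib,
      Finset.sum_neg_distrib]
    simp only [Nat.choose_zero_right, Nat.cast_one, one_mul, add_comm 1 i]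
    rw [← hS]
    ring
  linarith

lemma euler_key (n : ℕ) :
    eulerZero n + ∑ k ∈ range (n + 1), (n.choose k : ℚ) * eulerZero k
      = if n = 0 then 2 else 0 := by
  have hpad : ∀ k ∈ range (n + 1),
      (n.choose k : ℚ) * eulerZero k
        = ∑ i ∈ range (n + 1), (2 : ℚ)⁻¹ ^ i * ((n.choose k : ℚ) * Dq i k) := by
    intro k hk
    have hk' : k + 1 ≤ n + 1 := by
      have := mem_range.mp hk; omega
    rw [eulerZero_eq]
    rw [show ∑ i ∈ range (k + 1), (2 : ℚ)⁻¹ ^ i * Dq i k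
        = ∑ i ∈ range (n + 1), (2 : ℚ)⁻¹ ^ i * Dq i k from
      Finset.sum_subset (Finset.range_subset_range.mpr hk')
        (fun i _ hni => by
          rw [Dq_eq_zero k i (by simp at hni ⊢; omega), mul_zero])]
    rw [Finset.mul_sum]
    refine Finset.sum_congr rfl fun i _ => by ring
  rw [Finset.sum_congr rfl hpad, Finset.sum_comm]
  have hinner : ∀ i ∈ range (n + 1),
      ∑ k ∈ range (n + 1), (2 : ℚ)⁻¹ ^ i * ((n.choose k : ℚ) * Dq i k)
        = (2 : ℚ)⁻¹ ^ i * (Dq i n - Dq (i + 1) n) := by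
    intro i _
    rw [← Finset.mul_sum, ← shift_pow, Dq_succ_formula]
  rw [Finset.sum_congr rfl hinner, eulerZero_eq]
  rw [← Finset.sum_add_distrib]
  have hterm : ∀ i ∈ range (n + 1),
      (2 : ℚ)⁻¹ ^ i * Dq i n + (2 : ℚ)⁻¹ ^ i * (Dq i n - Dq (i + 1) n)
        = (fun i => 2 * (2 : ℚ)⁻¹ ^ i * Dq i n) i
          - (fun i => 2 * (2 : ℚ)⁻¹ ^ i * Dq i n) (i + 1) := by
    intro i _
    simp only [pow_succ]
    ring
  rw [Finset.sum_congr rfl hterm, Finset.sum_range_sub']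
  have hD0 : Dq 0 n = (0 : ℚ) ^ n := by simp [Dq]
  rw [hD0, Dq_eq_zero n (n + 1) (by omega), mul_zero]
  rcases n with _ | n <;> simp

lemma sumQ (N : ℕ) :
    eulerZero 0 + ∑ b ∈ range N, ∑ k ∈ range (b + 1), (b.choose k : ℚ) * eulerZero (k + 1)
      = ∑ k ∈ range (N + 1), (N.choose k : ℚ) * eulerZero k := by
  have hswap : ∑ b ∈ range N, ∑ k ∈ range (b + 1), (b.choose k : ℚ) * eulerZero (k + 1)
      = ∑ k ∈ range N, (N.choose (k + 1) : ℚ) * eulerZero (k + 1) := by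
    have step1 : ∀ b ∈ range N,
        ∑ k ∈ range (b + 1), (b.choose k : ℚ) * eulerZero (k + 1)
          = ∑ k ∈ range N, if k ≤ b then (b.choose k : ℚ) * eulerZero (k + 1) else 0 := by
      intro b hb
      rw [← Finset.sum_filter]
      congr 1
      ext x
      simp only [Finset.mem_filter, Finset.mem_range]
      constructor
      · intro h; exact ⟨by have := mem_range.mp hb; omega, by omega⟩
      · intro h; omega
    rw [Finset.sum_congr rfl step1, Finset.sum_comm]
    refine Finset.sum_congr rfl fun k hk => ?_
    rw [← Finset.sum_filter]
    have hfil : (range N).filter (fun b => k ≤ b) = Finset.Ico k N := by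
      ext x
      simp only [Finset.mem_filter, Finset.mem_range, Finset.mem_Ico]
      omega
    rw [hfil, ← Finset.sum_mul]
    congr 1
    have hN : 1 ≤ N := by have := mem_range.mp hk; omega
    have hIco : Finset.Ico k N = Finset.Icc k (N - 1) := by
      ext x
      simp only [Finset.mem_Ico, Finset.mem_Icc]
      omega
    rw [hIco]
    have h := Nat.sum_Icc_choose (N - 1) k
    have hcast : (∑ m ∈ Finset.Icc k (N - 1), (m.choose k : ℚ))
        = (((N - 1 + 1).choose (k + 1) : ℕ) : ℚ) := by exact_mod_cast h
    rw [hcast]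
    congr 2
    omega
  rw [hswap, Finset.sum_range_succ' (fun k => (N.choose k : ℚ) * eulerZero k) N]
  simp [add_comm]

lemma hockey (m k : ℕ) :
    ∑ b ∈ range (m + 1), (b + k).choose k = (m + k + 1).choose (k + 1) := by
  induction m with
  | zero => simp
  | succ m ih =>
    have h1 : m + 1 + k = m + k + 1 := by omega
    rw [Finset.sum_range_succ, ih, h1, Nat.choose_succ_succ' (m + k + 1) k]
    omega

/-- Formal composition `F ∘ G` of power series (intended for `G` with zero constant
term, in which case `coeff N (G^k) = 0` for `k > N` and the truncation is exact). -/
noncomputable def composePS {K : Type*} [CommRing K] (F G : PowerSeries K) : PowerSeries K :=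
  PowerSeries.mk fun N =>
    ∑ k ∈ Finset.range (N + 1), PowerSeries.coeff k F * PowerSeries.coeff N (G ^ k)

/-- The formal power series `Ψ(z) = ∑_{k≥0} E_k(0) zᵏ`, over the field `ℚ(s)` of
rational functions (`s = RatFunc.X`). -/
noncomputable def PsiPS : PowerSeries (RatFunc ℚ) :=
  PowerSeries.mk fun k => RatFunc.C (eulerZero k)

/-- The series `Ψ(x/s) = ∑_k E_k(0) xᵏ/sᵏ`, a power series in `x` over `ℚ(s)`. -/
noncomputable def PsiXS : PowerSeries (RatFunc ℚ) :=
  PowerSeries.mk fun k => RatFunc.C (eulerZero k) * (RatFunc.X)⁻¹ ^ k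

/-- The formal expansion `x/(s-x) = ∑_{j≥1} xʲ/sʲ` as a power series in `x`. -/
noncomputable def xOverSMinusX : PowerSeries (RatFunc ℚ) :=
  PowerSeries.mk fun j => if j = 0 then 0 else (RatFunc.X)⁻¹ ^ j

/-- The formal expansion `1/(s-x) = ∑_{j≥0} xʲ/s^{j+1}` as a power series in `x`. -/
noncomputable def oneOverSMinusX : PowerSeries (RatFunc ℚ) :=
  PowerSeries.mk fun j => (RatFunc.X)⁻¹ ^ (j + 1)

local notation "K" => RatFunc ℚ
local notation "u" => (RatFunc.X : RatFunc ℚ)⁻¹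

lemma coeff_A (m : ℕ) : PowerSeries.coeff m oneOverSMinusX = u ^ (m + 1) := by
  simp [oneOverSMinusX]

lemma coeff_A_pow (k : ℕ) : ∀ m : ℕ,
    PowerSeries.coeff m (oneOverSMinusX ^ (k + 1))
      = (((m + k).choose k : ℕ) : K) * u ^ (m + k + 1) := by
  induction k with
  | zero =>
    intro m
    simp [coeff_A]
  | succ k ih =>
    intro m
    rw [pow_succ']
    rw [PowerSeries.coeff_mul, Finset.Nat.sum_antidiagonal_eq_sum_range_succ_mk]
    have hterm : ∀ a ∈ range (m + 1),
        PowerSeries.coeff a oneOverSMinusX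
            * PowerSeries.coeff (m - a) (oneOverSMinusX ^ (k + 1))
          = (((m - a + k).choose k : ℕ) : K) * u ^ (m + k + 2) := by
      intro a ha
      rw [coeff_A, ih (m - a)]
      have hle : a ≤ m := by have := mem_range.mp ha; omega
      have : (a + 1) + (m - a + k + 1) = m + k + 2 := by omega
      rw [mul_left_comm, ← pow_add, this]
    rw [Finset.sum_congr rfl hterm, ← Finset.sum_mul, ← Nat.cast_sum]
    congr 2
    have hrefl := Finset.sum_range_reflect (fun b => (b + k).choose k) (m + 1)
    have : ∀ a ∈ range (m + 1), (m + 1 - 1 - a + k).choose k = (m - a + k).choose k := by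
      intro a _; congr 2 <;> omega
    rw [← Finset.sum_congr rfl this, hrefl, hockey]
    congr 1 <;> omega

lemma G_eq : xOverSMinusX = PowerSeries.X * oneOverSMinusX := by
  ext j
  cases j with
  | zero => simp [xOverSMinusX]
  | succ j =>
    rw [PowerSeries.coeff_succ_X_mul, coeff_A]
    simp [xOverSMinusX]

lemma coeff_G_pow (k b : ℕ) :
    PowerSeries.coeff b (xOverSMinusX ^ k)
      = if k ≤ b then PowerSeries.coeff (b - k) (oneOverSMinusX ^ k) else 0 := by
  rw [G_eq, mul_pow, PowerSeries.coeff_X_pow_mul']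

noncomputable def cps : ℕ → ℚ
  | 0 => eulerZero 0
  | (b + 1) => ∑ k ∈ Finset.range (b + 1), (b.choose k : ℚ) * eulerZero (k + 1)

lemma coeff_compose (b : ℕ) :
    PowerSeries.coeff b (composePS PsiPS xOverSMinusX) = RatFunc.C (cps b) * u ^ b := by
  rw [composePS, PowerSeries.coeff_mk]
  cases b with
  | zero =>
    simp [PsiPS, cps, coeff_G_pow]
  | succ b =>
    rw [Finset.sum_range_succ']
    have h0 : PowerSeries.coeff 0 PsiPS * PowerSeries.coeff (b + 1) (xOverSMinusX ^ 0)
        = 0 := by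
      rw [pow_zero, PowerSeries.coeff_one]
      simp
    rw [h0, add_zero]
    have hterm : ∀ k ∈ range (b + 1),
        PowerSeries.coeff (k + 1) PsiPS
            * PowerSeries.coeff (b + 1) (xOverSMinusX ^ (k + 1))
          = RatFunc.C ((b.choose k : ℚ) * eulerZero (k + 1)) * u ^ (b + 1) := by
      intro k hk
      have hkb : k ≤ b := by have := mem_range.mp hk; omega
      rw [coeff_G_pow, if_pos (by omega), show b + 1 - (k + 1) = b - k from by omega,
        coeff_A_pow, show b - k + k = b from by omega]
      rw [PsiPS, PowerSeries.coeff_mk]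
      rw [show (((b.choose k : ℕ) : K)) = RatFunc.C ((b.choose k : ℕ) : ℚ) from by
        rw [map_natCast]]
      rw [← mul_assoc, ← map_mul, mul_comm (eulerZero (k + 1))]
    rw [Finset.sum_congr rfl hterm, ← Finset.sum_mul, ← map_sum]
    rfl

/-- `1/s = (1/(2s))·Ψ(x/s) + (1/(2(s-x)))·Ψ(x/(s-x))` as formal power series in `x`
over `ℚ(s)`. -/
theorem psi_functional_equation :
    PowerSeries.C (R := RatFunc ℚ) (RatFunc.X)⁻¹
      = PowerSeries.C (R := RatFunc ℚ) ((2 : RatFunc ℚ)⁻¹ * (RatFunc.X)⁻¹) * PsiXS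
        + PowerSeries.C (R := RatFunc ℚ) (2 : RatFunc ℚ)⁻¹ * oneOverSMinusX
            * composePS PsiPS xOverSMinusX := by
  ext N
  rw [map_add, PowerSeries.coeff_C]
  have hc2 : PowerSeries.coeff N
      (PowerSeries.C (R := K) (2 : RatFunc ℚ)⁻¹ * oneOverSMinusX * composePS PsiPS xOverSMinusX)
      = (2 : K)⁻¹ * PowerSeries.coeff N (oneOverSMinusX * composePS PsiPS xOverSMinusX) := by
    rw [mul_assoc, PowerSeries.coeff_C_mul]
  rw [PowerSeries.coeff_C_mul, hc2, PowerSeries.coeff_mul,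
    Finset.Nat.sum_antidiagonal_eq_sum_range_succ_mk]
  have hterm : ∀ a ∈ range (N + 1),
      PowerSeries.coeff a oneOverSMinusX
          * PowerSeries.coeff (N - a) (composePS PsiPS xOverSMinusX)
        = RatFunc.C (cps (N - a)) * u ^ (N + 1) := by
    intro a ha
    rw [coeff_A, coeff_compose, mul_left_comm, ← pow_add,
      show a + 1 + (N - a) = N + 1 from by
        have := mem_range.mp ha; omega]
  rw [Finset.sum_congr rfl hterm, ← Finset.sum_mul, ← map_sum]
  have hrefl := Finset.sum_range_reflect cps (N + 1)
  have hre : ∀ a ∈ range (N + 1), cps (N + 1 - 1 - a) = cps (N - a) := by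
    intro a _; congr 1
  rw [← Finset.sum_congr rfl hre, hrefl]
  have hsum : ∑ b ∈ range (N + 1), cps b
      = ∑ k ∈ range (N + 1), (N.choose k : ℚ) * eulerZero k := by
    rw [Finset.sum_range_succ' cps N]
    have : ∀ b ∈ range N, cps (b + 1)
        = ∑ k ∈ range (b + 1), (b.choose k : ℚ) * eulerZero (k + 1) := fun b _ => rfl
    rw [Finset.sum_congr rfl this, show cps 0 = eulerZero 0 from rfl, add_comm, sumQ]
  rw [hsum]
  have hkey := euler_key N
  have hEq : ∑ k ∈ range (N + 1), (N.choose k : ℚ) * eulerZero k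
      = (if N = 0 then 2 else 0) - eulerZero N := by linarith
  rw [hEq, PsiXS, PowerSeries.coeff_mk]
  rw [map_sub]
  rcases eq_or_ne N 0 with rfl | hN
  · simp only [if_pos, pow_zero, mul_one]
    rw [show RatFunc.C ((2 : ℚ)) = (2 : K) from by simp]
    rw [show RatFunc.C (eulerZero 0) = 1 from by
      rw [show eulerZero 0 = 1 from by norm_num [eulerZero_eq, Dq]]; simp]
    ring_nf
  · rw [if_neg hN, if_neg hN]
    rw [show RatFunc.C ((0:ℚ)) = 0 from by simp]
    ring
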